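/- (Telescoping identity for off-policy evaluation.) In the finite MDP setting, let π : S → A be a deterministic policy, d₀ a probability distribution on S, and define the occupancy sequence d^π_0(s,a) = d₀(s) 𝟙[a = π(s)] and d^π_{t+1}(s',a') = 𝟙[a' = π(s')] ∑_{(s,a)} d^π_t(s,a) P(s'|s,a), and the normalized discounted occupancy d^π(s,a) = (1−γ) ∑_{t=0}^∞ γ^t d^π_t(s,a) (the series converges since γ ∈ [0,1)). Let J(π) = ∑_s d₀(s) Q^π(s, π(s)). Then for every Q : S×A → ℝ: J(π) = ∑_s d₀(s) Q(s, π(s)) − (1/(1−γ)) ∑_{(s,a)} d^π(s,a) (Q(s,a) − (T^π Q)(s,a)). -/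

import Mathlib

open Finset

/-- The policy Bellman operator `T^π`. -/
noncomputable def TPol {S A : Type*} [Fintype S] [Fintype A]
    (R : S × A → ℝ) (P : S × A → S → ℝ) (γ : ℝ) (π : S → A)
    (Q : S × A → ℝ) (x : S × A) : ℝ :=
  R x + γ * ∑ s' : S, P x s' * Q (s', π s')

/-- The `t`-step state-action occupancy of the deterministic policy `π` started from `d₀`:
`d^π_0(s,a) = d₀(s) 𝟙[a = π(s)]`,
`d^π_{t+1}(s',a') = 𝟙[a' = π(s')] ∑_{(s,a)} d^π_t(s,a) P(s'|s,a)`. -/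
noncomputable def occ {S A : Type*} [Fintype S] [Fintype A] [DecidableEq A]
    (P : S × A → S → ℝ) (π : S → A) (d₀ : S → ℝ) : ℕ → S × A → ℝ
  | 0 => fun x => d₀ x.1 * (if x.2 = π x.1 then 1 else 0)
  | (t + 1) => fun x =>
      (if x.2 = π x.1 then 1 else 0) * ∑ y : S × A, occ P π d₀ t y * P y x.1


section aux
variable {S A : Type*} [Fintype S] [Fintype A] [DecidableEq A]
  (R : S × A → ℝ) (P : S × A → S → ℝ) (γ : ℝ) (π : S → A) (d₀ : S → ℝ)

lemma occ_nonneg (hP0 : ∀ x s', 0 ≤ P x s') (hd₀0 : ∀ s, 0 ≤ d₀ s) :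
    ∀ t x, 0 ≤ occ P π d₀ t x := by
  intro t
  induction t with
  | zero =>
    intro x; simp only [occ]
    apply mul_nonneg (hd₀0 x.1); split_ifs <;> norm_num
  | succ t ih =>
    intro x
    simp only [occ]
    apply mul_nonneg (by split_ifs <;> norm_num)
    exact Finset.sum_nonneg fun y _ => mul_nonneg (ih y) (hP0 y x.1)

lemma collapse (f : S × A → ℝ) :
    ∑ x : S × A, (if x.2 = π x.1 then (1:ℝ) else 0) * f x = ∑ s : S, f (s, π s) := by
  rw [Fintype.sum_prod_type]
  simp

lemma occ_sum (hP1 : ∀ x, ∑ s' : S, P x s' = 1) (hd₀1 : ∑ s : S, d₀ s = 1) :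
    ∀ t, ∑ x : S × A, occ P π d₀ t x = 1 := by
  intro t
  induction t with
  | zero =>
    have h : ∀ x : S × A, occ P π d₀ 0 x
        = (if x.2 = π x.1 then (1:ℝ) else 0) * d₀ x.1 := by
      intro x; simp only [occ]; ring
    simp_rw [h]
    rw [collapse]
    exact hd₀1
  | succ t ih =>
    simp only [occ]
    rw [collapse π (fun x => ∑ y : S × A, occ P π d₀ t y * P y x.1)]
    rw [Finset.sum_comm]
    simp_rw [← Finset.mul_sum, hP1, mul_one]
    exact ih

lemma occ_le_one (hP0 : ∀ x s', 0 ≤ P x s') (hd₀0 : ∀ s, 0 ≤ d₀ s)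
    (hP1 : ∀ x, ∑ s' : S, P x s' = 1) (hd₀1 : ∑ s : S, d₀ s = 1) (t : ℕ) (x : S × A) :
    occ P π d₀ t x ≤ 1 := by
  rw [← occ_sum P π d₀ hP1 hd₀1 t]
  exact Finset.single_le_sum (fun y _ => occ_nonneg P π d₀ hP0 hd₀0 t y) (Finset.mem_univ x)

lemma occ_succ_pair (Q : S × A → ℝ) (t : ℕ) :
    ∑ x : S × A, occ P π d₀ (t + 1) x * Q x
      = ∑ y : S × A, occ P π d₀ t y * ∑ s' : S, P y s' * Q (s', π s') := by
  have h : ∀ x : S × A, occ P π d₀ (t + 1) x * Q x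
      = (if x.2 = π x.1 then (1:ℝ) else 0)
          * ((∑ y : S × A, occ P π d₀ t y * P y x.1) * Q x) := by
    intro x; simp only [occ]; ring
  simp_rw [h]
  rw [collapse π (fun x => (∑ y : S × A, occ P π d₀ t y * P y x.1) * Q x)]
  simp_rw [Finset.sum_mul, Finset.mul_sum, mul_assoc]
  exact Finset.sum_comm

lemma occ_zero_pair (Q : S × A → ℝ) :
    ∑ x : S × A, occ P π d₀ 0 x * Q x = ∑ s : S, d₀ s * Q (s, π s) := by
  have h : ∀ x : S × A, occ P π d₀ 0 x * Q x
      = (if x.2 = π x.1 then (1:ℝ) else 0) * (d₀ x.1 * Q x) := by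
    intro x; simp only [occ]; ring
  simp_rw [h]
  exact collapse π (fun x => d₀ x.1 * Q x)

lemma step (Q : S × A → ℝ) (t : ℕ) :
    ∑ x : S × A, occ P π d₀ t x * (Q x - TPol R P γ π Q x)
      = (∑ x : S × A, occ P π d₀ t x * Q x)
        - (∑ x : S × A, occ P π d₀ t x * R x)
        - γ * ∑ x : S × A, occ P π d₀ (t + 1) x * Q x := by
  rw [occ_succ_pair P π d₀ Q t, Finset.mul_sum, ← Finset.sum_sub_distrib,
    ← Finset.sum_sub_distrib]
  apply Finset.sum_congr rfl
  intro x _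
  simp only [TPol]
  ring

lemma key (hP0 : ∀ x s', 0 ≤ P x s') (hP1 : ∀ x, ∑ s' : S, P x s' = 1)
    (hγ0 : 0 ≤ γ) (hγ1 : γ < 1)
    (hd₀0 : ∀ s, 0 ≤ d₀ s) (hd₀1 : ∑ s : S, d₀ s = 1) (Q : S × A → ℝ) :
    (∑ s : S, d₀ s * Q (s, π s)) -
      (1 / (1 - γ)) * ∑ x : S × A,
        ((1 - γ) * ∑' t : ℕ, γ ^ t * occ P π d₀ t x) * (Q x - TPol R P γ π Q x)
    = ∑' t : ℕ, γ ^ t * ∑ x : S × A, occ P π d₀ t x * R x := by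
  have hγp : (0:ℝ) < 1 - γ := by linarith
  have hgeo : Summable (fun t : ℕ => γ ^ t) := summable_geometric_of_lt_one hγ0 hγ1
  have hoccS : ∀ x : S × A, Summable (fun t => γ ^ t * occ P π d₀ t x) := by
    intro x
    refine Summable.of_nonneg_of_le
      (fun t => mul_nonneg (pow_nonneg hγ0 t) (occ_nonneg P π d₀ hP0 hd₀0 t x))
      (fun t => ?_) hgeo
    calc γ ^ t * occ P π d₀ t x ≤ γ ^ t * 1 :=
          mul_le_mul_of_nonneg_left (occ_le_one P π d₀ hP0 hd₀0 hP1 hd₀1 t x)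
            (pow_nonneg hγ0 t)
      _ = γ ^ t := mul_one _
  have hsumG : ∀ G : S × A → ℝ,
      Summable (fun t => γ ^ t * ∑ x : S × A, occ P π d₀ t x * G x) := by
    intro G
    have e : (fun t => γ ^ t * ∑ x : S × A, occ P π d₀ t x * G x)
        = fun t => ∑ x : S × A, (γ ^ t * occ P π d₀ t x) * G x := by
      funext t; rw [Finset.mul_sum]; exact Finset.sum_congr rfl fun x _ => by ring
    rw [e]
    exact summable_sum (fun x _ => (hoccS x).mul_right (G x))
  have h1 : ∑ x : S × A, ((1 - γ) * ∑' t : ℕ, γ ^ t * occ P π d₀ t x)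
        * (Q x - TPol R P γ π Q x)
      = (1 - γ) * ∑' t : ℕ, γ ^ t * ∑ x : S × A,
          occ P π d₀ t x * (Q x - TPol R P γ π Q x) := by
    have e1 : ∀ x : S × A, ((1 - γ) * ∑' t : ℕ, γ ^ t * occ P π d₀ t x)
          * (Q x - TPol R P γ π Q x)
        = (1 - γ) * ∑' t : ℕ, (γ ^ t * occ P π d₀ t x) * (Q x - TPol R P γ π Q x) := by
      intro x; rw [tsum_mul_right]; ring
    simp_rw [e1, ← Finset.mul_sum]
    congr 1
    rw [← Summable.tsum_finsetSum (fun x _ => (hoccS x).mul_right (Q x - TPol R P γ π Q x))]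
    refine tsum_congr fun t => ?_
    rw [Finset.mul_sum]; exact Finset.sum_congr rfl fun x _ => by ring
  rw [h1]
  set a : ℕ → ℝ := fun t => γ ^ t * ∑ x : S × A, occ P π d₀ t x * Q x with ha
  set r : ℕ → ℝ := fun t => γ ^ t * ∑ x : S × A, occ P π d₀ t x * R x with hr
  have hA : Summable a := hsumG Q
  have hRs : Summable r := hsumG R
  have hA' : Summable (fun t => a (t + 1)) := (summable_nat_add_iff 1).2 hA
  have h2 : ∀ t : ℕ, γ ^ t * ∑ x : S × A, occ P π d₀ t x * (Q x - TPol R P γ π Q x)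
      = a t - a (t + 1) - r t := by
    intro t
    rw [step R P γ π d₀ Q t]
    simp only [ha, hr, pow_succ]
    ring
  have h3 : ∑' t : ℕ, γ ^ t * ∑ x : S × A,
        occ P π d₀ t x * (Q x - TPol R P γ π Q x)
      = a 0 - ∑' t, r t := by
    calc ∑' t : ℕ, γ ^ t * ∑ x : S × A, occ P π d₀ t x * (Q x - TPol R P γ π Q x)
        = ∑' t, (a t - a (t + 1) - r t) := tsum_congr h2
      _ = (∑' t, (a t - a (t + 1))) - ∑' t, r t := Summable.tsum_sub (hA.sub hA') hRs
      _ = ((∑' t, a t) - ∑' t, a (t + 1)) - ∑' t, r t := by rw [Summable.tsum_sub hA hA']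
      _ = a 0 - ∑' t, r t := by rw [Summable.tsum_eq_zero_add hA]; ring
  rw [h3]
  have h0 : a 0 = ∑ s : S, d₀ s * Q (s, π s) := by
    simp only [ha, pow_zero, one_mul]; exact occ_zero_pair P π d₀ Q
  rw [h0]
  field_simp
  ring

end aux

/-- telescoping identity for off-policy evaluation: with
`d^π = (1−γ) ∑_t γ^t d^π_t` and `J(π) = ∑_s d₀(s) Q^π(s, π(s))`, for every `Q`,
`J(π) = ∑_s d₀(s) Q(s,π(s)) − (1/(1−γ)) ∑_{(s,a)} d^π(s,a)(Q(s,a) − (T^π Q)(s,a))`. -/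
theorem stmt_13 {S A : Type*} [Fintype S] [Fintype A] [Nonempty S] [Nonempty A]
    [DecidableEq A]
    (Rmax : ℝ) (R : S × A → ℝ) (hR : ∀ x, 0 ≤ R x ∧ R x ≤ Rmax)
    (P : S × A → S → ℝ) (hP0 : ∀ x s', 0 ≤ P x s') (hP1 : ∀ x, ∑ s' : S, P x s' = 1)
    (γ : ℝ) (hγ0 : 0 ≤ γ) (hγ1 : γ < 1)
    (π : S → A)
    (Qpi : S × A → ℝ) (hQpi : TPol R P γ π Qpi = Qpi)
    (d₀ : S → ℝ) (hd₀0 : ∀ s, 0 ≤ d₀ s) (hd₀1 : ∑ s : S, d₀ s = 1) :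
    ∀ Q : S × A → ℝ,
      (∑ s : S, d₀ s * Qpi (s, π s)) =
        (∑ s : S, d₀ s * Q (s, π s)) -
          (1 / (1 - γ)) * ∑ x : S × A,
            ((1 - γ) * ∑' t : ℕ, γ ^ t * occ P π d₀ t x) * (Q x - TPol R P γ π Q x) := by
  intro Q
  have h1 := key R P γ π d₀ hP0 hP1 hγ0 hγ1 hd₀0 hd₀1 Qpi
  have h2 := key R P γ π d₀ hP0 hP1 hγ0 hγ1 hd₀0 hd₀1 Q
  rw [hQpi] at h1
  simp only [sub_self, mul_zero, Finset.sum_const_zero] at h1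
  linarith
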